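/- Let a, b, d, e be integers with 2a^2 e + d^2 ≠ 0. Then the rational numbers T₁ = -2ae(ab + d)/(2a^2 e + d^2) and S₁ = ae(4a^4 e^2 - 4a^3 b d e + 2a^2 b^2 d^2 + 2a b d^3 + d^4)/(2a^2 e + d^2)^2 satisfy the quartic equation a^2 T₁^4 + 2a^2 b T₁^3 + (a^2 b^2 + d^2) T₁^2 + 2ade T₁ + a^2 e^2 = S₁^2. -/

import Mathlib

/-- The point `(T₁, S₁)` constructed by Fermat's method lies on the quartic
curve `a^2 T^4 + 2a^2 b T^3 + (a^2 b^2 + d^2) T^2 + 2ade T + a^2 e^2 = S^2`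
(proof of Theorem 1.4 of Zhang–Zargar). -/
theorem stmt14 (a b d e : ℤ) (h : 2 * a ^ 2 * e + d ^ 2 ≠ 0) :
    let T₁ : ℚ := -2 * a * e * (a * b + d) / (2 * a ^ 2 * e + d ^ 2)
    let S₁ : ℚ := a * e * (4 * a ^ 4 * e ^ 2 - 4 * a ^ 3 * b * d * e
      + 2 * a ^ 2 * b ^ 2 * d ^ 2 + 2 * a * b * d ^ 3 + d ^ 4)
      / (2 * a ^ 2 * e + d ^ 2) ^ 2
    a ^ 2 * T₁ ^ 4 + 2 * a ^ 2 * b * T₁ ^ 3 + (a ^ 2 * b ^ 2 + d ^ 2) * T₁ ^ 2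
      + 2 * a * d * e * T₁ + a ^ 2 * e ^ 2 = S₁ ^ 2 := by
  have h' : ((2 * a ^ 2 * e + d ^ 2 : ℤ) : ℚ) ≠ 0 := by exact_mod_cast h
  push_cast at h'
  intro T₁ S₁
  simp only [T₁, S₁]
  have h'' : (a : ℚ) ^ 2 * 2 * e + d ^ 2 ≠ 0 := by convert h' using 2; ring
  field_simp
  ring
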